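/- Let r be odd and n even, and let K be the complete r-uniform r-partite hypergraph with classes of size n. Split each class into n/2 '+' vertices and n/2 '−' vertices, and define f(A) = 1 if A contains more '+' vertices than '−', and f(A) = -1 otherwise. Then Σ_A f(A) = 0 and for every vertex v, |Σ_{A ∋ v} f(A)| = C(r-1, ⌊r/2⌋)·(n/2)^{r-1}. -/
import Mathlib


open Finset

noncomputable section

namespace Stmt12Aux

variable {r : ℕ}

def g (r : ℕ) (s : Fin r → Bool) : ℝ :=
  if r < 2 * (univ.filter (fun i => s i = true)).card then 1 else -1

def negE : (Fin r → Bool) ≃ (Fin r → Bool) where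
  toFun s := fun i => !(s i)
  invFun s := fun i => !(s i)
  left_inv s := by funext i; simp
  right_inv s := by funext i; simp

lemma card_neg (s : Fin r → Bool) :
    (univ.filter (fun i => (!(s i)) = true)).card
      = r - (univ.filter (fun i => s i = true)).card := by
  have h : (univ.filter (fun i => (!(s i)) = true))
      = univ \ (univ.filter (fun i => s i = true)) := by
    ext i; simp [Bool.not_eq_true']
  rw [h, card_sdiff_of_subset (filter_subset _ _)]
  simp

lemma w_le (s : Fin r → Bool) : (univ.filter (fun i => s i = true)).card ≤ r := by
  simpa using card_filter_le univ (fun i => s i = true)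

lemma g_neg (hro : Odd r) (s : Fin r → Bool) : g r (negE s) = - g r s := by
  obtain ⟨a, rfl⟩ := hro
  have hw := w_le s
  unfold g negE
  simp only [Equiv.coe_fn_mk]
  simp only [card_neg]
  split_ifs with h1 h2 h2 <;> (try norm_num) <;> omega

lemma sum_g_zero (hro : Odd r) : ∑ s : Fin r → Bool, g r s = 0 := by
  have h : ∑ s : Fin r → Bool, g r (negE s) = ∑ s : Fin r → Bool, g r s :=
    Fintype.sum_equiv negE _ _ (fun s => rfl)
  have h2 : ∑ s : Fin r → Bool, g r (negE s) = - ∑ s : Fin r → Bool, g r s := by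
    rw [← Finset.sum_neg_distrib]
    exact Finset.sum_congr rfl fun s _ => g_neg hro s
  have := h.symm.trans h2
  linarith

def flipE (i : Fin r) : (Fin r → Bool) ≃ (Fin r → Bool) where
  toFun s := fun j => if j = i then s j else !(s j)
  invFun s := fun j => if j = i then s j else !(s j)
  left_inv s := by funext j; by_cases h : j = i <;> simp [h]
  right_inv s := by funext j; by_cases h : j = i <;> simp [h]

lemma filter_flip (i : Fin r) (s : Fin r → Bool) (hs : s i = true) :
    univ.filter (fun j => (flipE i s) j = true)
      = insert i (univ.filter (fun j => s j = false)) := by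
  ext j
  by_cases h : j = i <;> simp [flipE, h, hs, Bool.not_eq_true']

lemma card_false (s : Fin r → Bool) :
    (univ.filter (fun j => s j = false)).card
      = r - (univ.filter (fun j => s j = true)).card := by
  have h : (univ.filter (fun j => s j = false))
      = univ \ (univ.filter (fun j => s j = true)) := by
    ext j; simp [Bool.not_eq_true']
  rw [h, card_sdiff_of_subset (filter_subset _ _)]
  simp

lemma card_flip (i : Fin r) (s : Fin r → Bool) (hs : s i = true) :
    (univ.filter (fun j => (flipE i s) j = true)).card
      = r - (univ.filter (fun j => s j = true)).card + 1 := by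
  rw [filter_flip i s hs, card_insert_of_notMem (by simp [hs]), card_false]

lemma g_flip (hro : Odd r) (i : Fin r) (s : Fin r → Bool) (hs : s i = true) :
    g r (flipE i s) + g r s
      = if (univ.filter (fun j => s j = true)).card = r / 2 + 1 then 2 else 0 := by
  obtain ⟨a, rfl⟩ := hro
  have hw := w_le s
  have hw1 : 1 ≤ (univ.filter (fun j => s j = true)).card :=
    card_pos.mpr ⟨i, by simp [hs]⟩
  unfold g
  simp only [card_flip i s hs]
  split_ifs with h1 h2 h3 h2 h3 <;> (try norm_num) <;> omega

lemma count_half (hro : Odd r) (i : Fin r) :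
    (univ.filter (fun s : Fin r → Bool => s i = true ∧
        (univ.filter (fun j => s j = true)).card = r / 2 + 1)).card
      = (r - 1).choose (r / 2) := by
  have key : (univ.filter (fun s : Fin r → Bool => s i = true ∧
        (univ.filter (fun j => s j = true)).card = r / 2 + 1)).card
      = (Finset.powersetCard (r / 2) ((univ : Finset (Fin r)).erase i)).card := by
    apply Finset.card_bij' (fun s _ => (univ.filter (fun j => s j = true)).erase i)
      (fun S _ => fun j => decide (j = i ∨ j ∈ S))
    case hi =>
      intro s hs
      simp only [mem_filter, mem_univ, true_and] at hs
      rw [Finset.mem_powersetCard]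
      constructor
      · exact Finset.erase_subset_erase i (by intro x _; simp)
      · rw [card_erase_of_mem (by simp [hs.1]), hs.2]
        simp
    case hj =>
      intro S hS
      rw [Finset.mem_powersetCard] at hS
      have hiS : i ∉ S := fun h => by simpa using (hS.1 h)
      have hins : univ.filter (fun j => (decide (j = i ∨ j ∈ S)) = true) = insert i S := by
        ext j; simp [Finset.mem_insert]
      simp only [mem_filter, mem_univ, true_and]
      constructor
      · simp
      · rw [hins, card_insert_of_notMem hiS, hS.2]
    case left_inv =>
      intro s hs
      simp only [mem_filter, mem_univ, true_and] at hs
      funext j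
      by_cases h : j = i
      · subst h; simpa using hs.1.symm
      · simp only [Finset.mem_erase, h, mem_filter, mem_univ, true_and]
        simp [h]
    case right_inv =>
      intro S hS
      rw [Finset.mem_powersetCard] at hS
      have hiS : i ∉ S := fun h => by simpa using (hS.1 h)
      have hins : univ.filter (fun j => (decide (j = i ∨ j ∈ S)) = true) = insert i S := by
        ext j; simp [Finset.mem_insert]
      rw [hins, Finset.erase_insert hiS]
  rw [key, Finset.card_powersetCard, Finset.card_erase_of_mem (by simp)]
  simp

lemma sum_g_true (hro : Odd r) (i : Fin r) :
    ∑ s ∈ univ.filter (fun s : Fin r → Bool => s i = true), g r s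
      = ((r - 1).choose (r / 2) : ℝ) := by
  set T := univ.filter (fun s : Fin r → Bool => s i = true) with hT
  have hmem : ∀ s : Fin r → Bool, s ∈ T ↔ flipE i s ∈ T := by
    intro s; simp [hT, flipE]
  have h1 : ∑ s ∈ T, g r (flipE i s) = ∑ s ∈ T, g r s :=
    Finset.sum_equiv (flipE i) (fun s => hmem s) (fun s _ => rfl)
  have h2 : ∑ s ∈ T, (g r (flipE i s) + g r s)
      = ∑ s ∈ T, (if (univ.filter (fun j => s j = true)).card = r / 2 + 1
          then (2 : ℝ) else 0) := by
    apply Finset.sum_congr rfl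
    intro s hs
    have : s i = true := by simpa [hT] using hs
    exact g_flip hro i s this
  have h3 : ∑ s ∈ T, (if (univ.filter (fun j => s j = true)).card = r / 2 + 1
          then (2 : ℝ) else 0)
      = 2 * ((r - 1).choose (r / 2) : ℝ) := by
    rw [← Finset.sum_filter]
    rw [Finset.sum_const]
    have : T.filter (fun s => (univ.filter (fun j => s j = true)).card = r / 2 + 1)
        = univ.filter (fun s : Fin r → Bool => s i = true ∧
            (univ.filter (fun j => s j = true)).card = r / 2 + 1) := by
      rw [hT, Finset.filter_filter]
    rw [this, count_half hro i]
    simp [mul_comm]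
  have h4 : ∑ s ∈ T, (g r (flipE i s) + g r s) = 2 * ∑ s ∈ T, g r s := by
    rw [Finset.sum_add_distrib, h1]; ring
  have := h4.symm.trans (h2.trans h3)
  linarith

lemma sum_g_false (hro : Odd r) (i : Fin r) :
    ∑ s ∈ univ.filter (fun s : Fin r → Bool => s i = false), g r s
      = -((r - 1).choose (r / 2) : ℝ) := by
  have h1 : ∑ s ∈ univ.filter (fun s : Fin r → Bool => s i = true), g r (negE s)
      = ∑ s ∈ univ.filter (fun s : Fin r → Bool => s i = false), g r s := by
    apply Finset.sum_equiv negE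
    · intro s; simp [negE, Bool.not_eq_true']
    · intro s _; rfl
  rw [← h1]
  rw [Finset.sum_congr rfl (fun s _ => g_neg hro s), Finset.sum_neg_distrib,
    sum_g_true hro i]

lemma fiber_congr {m : ℕ} (i : Fin r) (c c' : Fin m) :
    (univ.filter fun t : Fin r → Fin m => t i = c).card
      = (univ.filter fun t : Fin r → Fin m => t i = c').card := by
  apply Finset.card_bij' (fun t _ => Function.update t i c') (fun t _ => Function.update t i c)
  case hi => intro t ht; simp
  case hj => intro t ht; simp
  case left_inv =>
    intro t ht
    simp only [mem_filter, mem_univ, true_and] at ht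
    rw [Function.update_idem, ← ht, Function.update_eq_self]
  case right_inv =>
    intro t ht
    simp only [mem_filter, mem_univ, true_and] at ht
    rw [Function.update_idem, ← ht, Function.update_eq_self]

lemma pow_split {m : ℕ} (hr : 0 < r) : m * m ^ (r - 1) = m ^ r := by
  obtain ⟨r', rfl⟩ : ∃ r', r = r' + 1 := ⟨r - 1, by omega⟩
  simp [pow_succ, mul_comm]

lemma fiber_card {m : ℕ} (hm : 0 < m) (i : Fin r) (c : Fin m) :
    (univ.filter fun t : Fin r → Fin m => t i = c).card = m ^ (r - 1) := by
  have hr : 0 < r := i.pos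
  have h1 : (univ : Finset (Fin r → Fin m)).card
      = ∑ c' : Fin m, (univ.filter fun t : Fin r → Fin m => t i = c').card :=
    Finset.card_eq_sum_card_fiberwise (fun t _ => mem_univ (t i))
  have h2 : ∑ c' : Fin m, (univ.filter fun t : Fin r → Fin m => t i = c').card
      = m * (univ.filter fun t : Fin r → Fin m => t i = c).card := by
    rw [Finset.sum_congr rfl (fun c' _ => fiber_congr i c' c), Finset.sum_const]
    simp [mul_comm]
  have h3 : (univ : Finset (Fin r → Fin m)).card = m ^ r := by
    simp [Finset.card_univ]
  have h4 : m * m ^ (r - 1) = m ^ r := pow_split hr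
  have htot := h1.trans h2
  rw [h3] at htot
  exact Nat.eq_of_mul_eq_mul_left hm (h4.trans htot).symm

def en (n m : ℕ) (hnm : n = 2 * m) : Bool × Fin m ≃ Fin n where
  toFun p := ⟨if p.1 then (p.2 : ℕ) else m + p.2, by
    have := p.2.isLt; split <;> omega⟩
  invFun j := if h : (j : ℕ) < m then (true, ⟨j, h⟩)
    else (false, ⟨(j : ℕ) - m, by have := j.isLt; omega⟩)
  left_inv p := by
    obtain ⟨b, t⟩ := p
    have ht := t.isLt
    cases b <;> simp_all <;> omega
  right_inv j := by
    have hj := j.isLt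
    by_cases h : (j : ℕ) < m <;> simp [h, Fin.ext_iff] <;> omega

lemma en_lt_iff {n m : ℕ} (hnm : n = 2 * m) (p : Bool × Fin m) :
    ((en n m hnm p : Fin n) : ℕ) < m ↔ p.1 = true := by
  obtain ⟨b, t⟩ := p
  have ht := t.isLt
  cases b
  · simp only [en, Equiv.coe_fn_mk]
    simp
  · simp only [en, Equiv.coe_fn_mk]
    simp

def EE (r n m : ℕ) (hnm : n = 2 * m) :
    ((Fin r → Bool) × (Fin r → Fin m)) ≃ (Fin r → Fin n) where
  toFun p := fun i => en n m hnm (p.1 i, p.2 i)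
  invFun A := (fun i => ((en n m hnm).symm (A i)).1, fun i => ((en n m hnm).symm (A i)).2)
  left_inv p := by
    obtain ⟨s, t⟩ := p
    simp
  right_inv A := by
    funext i
    simp

lemma EE_apply_eq_iff {r n m : ℕ} (hnm : n = 2 * m)
    (p : (Fin r → Bool) × (Fin r → Fin m)) (i : Fin r) (j : Fin n) :
    EE r n m hnm p i = j ↔
      p.1 i = ((en n m hnm).symm j).1 ∧ p.2 i = ((en n m hnm).symm j).2 := by
  constructor
  · intro h
    have : (p.1 i, p.2 i) = (en n m hnm).symm j := by
      rw [← h]; simp [EE]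
    exact ⟨by rw [← this], by rw [← this]⟩
  · intro ⟨h1, h2⟩
    show en n m hnm (p.1 i, p.2 i) = j
    rw [h1, h2]
    simp

lemma f_EE {r n m : ℕ} (hnm : n = 2 * m) (f : (Fin r → Fin n) → ℝ)
    (hf : ∀ A : Fin r → Fin n,
      f A = if r < 2 * (Finset.univ.filter (fun i : Fin r => (A i : ℕ) < n / 2)).card
        then 1 else -1)
    (p : (Fin r → Bool) × (Fin r → Fin m)) :
    f (EE r n m hnm p) = g r p.1 := by
  rw [hf]
  have hc : (Finset.univ.filter (fun i : Fin r => ((EE r n m hnm p) i : ℕ) < n / 2)).card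
      = (univ.filter (fun i => p.1 i = true)).card := by
    congr 1
    apply Finset.filter_congr
    intro i _
    have hm2 : n / 2 = m := by omega
    rw [hm2]
    show ((en n m hnm (p.1 i, p.2 i) : Fin n) : ℕ) < m ↔ p.1 i = true
    exact en_lt_iff hnm (p.1 i, p.2 i)
  simp only [hc]
  rfl

lemma f_EE' {r n m : ℕ} (hnm : n = 2 * m) (f : (Fin r → Fin n) → ℝ)
    (hf : ∀ A : Fin r → Fin n,
      f A = if r < 2 * (Finset.univ.filter (fun i : Fin r => (A i : ℕ) < n / 2)).card
        then 1 else -1)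
    (s : Fin r → Bool) (t : Fin r → Fin m) :
    f (EE r n m hnm (s, t)) = g r s :=
  f_EE hnm f hf (s, t)

end Stmt12Aux

open Stmt12Aux in
/-- r odd, n even. In the complete r-uniform r-partite hypergraph
with classes of size n, declaring vertex (i,j) a '+' vertex iff j < n/2, the
majority function f(A) = ±1 (according to whether A has more '+' than '−'
vertices) sums to 0 and every vertex v has |Σ_{A ∋ v} f(A)| = C(r-1,⌊r/2⌋)·(n/2)^{r-1}. -/
theorem stmt12 {r n : ℕ} (hro : Odd r) (hne : Even n) (hn : 0 < n)
    (f : (Fin r → Fin n) → ℝ)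
    (hf : ∀ A : Fin r → Fin n,
      f A = if r < 2 * (Finset.univ.filter (fun i : Fin r => (A i : ℕ) < n / 2)).card
        then 1 else -1) :
    (∑ A : Fin r → Fin n, f A = 0) ∧
    ∀ v : Fin r × Fin n,
      |∑ A ∈ Finset.univ.filter (fun A : Fin r → Fin n => A v.1 = v.2), f A|
        = ((r - 1).choose (r / 2) : ℝ) * ((n : ℝ) / 2) ^ (r - 1) := by
  obtain ⟨m, hm, hnm⟩ : ∃ m, 0 < m ∧ n = 2 * m := by
    have h2 := Nat.even_iff.mp hne
    exact ⟨n / 2, by omega, by omega⟩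
  constructor
  · -- total sum is zero
    have e1 : ∑ A : Fin r → Fin n, f A
        = ∑ p : (Fin r → Bool) × (Fin r → Fin m), f (EE r n m hnm p) :=
      (Equiv.sum_comp (EE r n m hnm) f).symm
    rw [e1, Fintype.sum_prod_type]
    have e2 : ∀ s : Fin r → Bool,
        ∑ t : Fin r → Fin m, f (EE r n m hnm (s, t)) = (m ^ r : ℝ) * g r s := by
      intro s
      rw [Finset.sum_congr rfl (fun t _ => f_EE' hnm f hf s t), Finset.sum_const]
      simp [Finset.card_univ]
    rw [Finset.sum_congr rfl (fun s _ => e2 s), ← Finset.mul_sum, sum_g_zero hro, mul_zero]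
  · intro v
    obtain ⟨i, j⟩ := v
    have hnr : ((n : ℝ) / 2) = (m : ℝ) := by
      rw [hnm]; push_cast; ring
    set b := ((en n m hnm).symm j).1 with hb
    set c := ((en n m hnm).symm j).2 with hc
    have hsum : ∑ p ∈ (univ.filter (fun s : Fin r → Bool => s i = b)) ×ˢ
          (univ.filter (fun t : Fin r → Fin m => t i = c)), f (EE r n m hnm p)
        = ∑ A ∈ Finset.univ.filter (fun A : Fin r → Fin n => A i = j), f A := by
      apply Finset.sum_equiv (EE r n m hnm)
      · intro p
        rw [Finset.mem_product]
        simp only [mem_filter, mem_univ, true_and]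
        rw [EE_apply_eq_iff hnm p i j]
      · intro p _; rfl
    rw [← hsum, Finset.sum_product]
    have e3 : ∀ s ∈ univ.filter (fun s : Fin r → Bool => s i = b),
        ∑ t ∈ univ.filter (fun t : Fin r → Fin m => t i = c), f (EE r n m hnm (s, t))
          = ((m : ℝ) ^ (r - 1)) * g r s := by
      intro s _
      rw [Finset.sum_congr rfl (fun t _ => f_EE' hnm f hf s t), Finset.sum_const,
        fiber_card hm i c]
      simp
    rw [Finset.sum_congr rfl e3, ← Finset.mul_sum]
    have hchoose : (0 : ℝ) ≤ ((r - 1).choose (r / 2) : ℝ) := by positivity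
    have hpow : (0 : ℝ) ≤ (m : ℝ) ^ (r - 1) := by positivity
    cases hbv : b
    · rw [hbv] at *
      rw [sum_g_false hro i]
      rw [abs_mul, abs_neg, abs_of_nonneg hchoose, abs_of_nonneg hpow, hnr]
      ring
    · rw [hbv] at *
      rw [sum_g_true hro i]
      rw [abs_mul, abs_of_nonneg hchoose, abs_of_nonneg hpow, hnr]
      ring
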